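/- Let ψ_T, p_T, ψ, p ∈ (0,1), let K, N be positive integers, and set θ_T = 1 − (1−p_T)^K and θ = 1 − (1−p)^K. Let Y₁, …, Y_N be independent, identically distributed zero-inflated binomial (ZIB) random variables with parameters (ψ_T, K, p_T), let s_d be the number of indices i with Y_i ≥ 1 and d = ∑_{i=1}^N Y_i, and define S₁ = (s_d − ψθN)/(ψ(1 − ψθ)) and S₂ = (d − s_d·K·p)/(p(1−p)) − (N − s_d)·ψ·K·(1−θ)/((1 − ψθ)(1−p)). Then Cov(S₁, S₂) = E(S₁S₂) − E(S₁)E(S₂) = N·ψ_T·(1 − ψ_T·θ_T)·K·((p_T − p·θ_T)/(ψ(1 − ψθ)·p(1−p)) + (1−θ)·θ_T/((1 − ψθ)²(1−p))). -/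
import Mathlib


/-- The probability mass function of the zero-inflated binomial distribution with
parameters `ψ`, `K`, `p`, for values `y = 0, 1, …, K`. -/
def zibPmf (ψ p : ℝ) (K : ℕ) (y : ℕ) : ℝ :=
  if y = 0 then 1 - ψ + ψ * (1 - p) ^ K
  else ψ * (K.choose y : ℝ) * p ^ y * (1 - p) ^ (K - y)

/-- Joint pmf of `N` i.i.d. zero-inflated binomial observations, each taking values in
`{0, 1, …, K}` (encoded as `Fin (K+1)`). -/
def zibJoint (ψ p : ℝ) (K N : ℕ) (ω : Fin N → Fin (K + 1)) : ℝ :=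
  ∏ i, zibPmf ψ p K (ω i)

/-- Expectation of a statistic `f` of `N` i.i.d. ZIB`(ψ, K, p)` observations. -/
def zibExp (ψ p : ℝ) (K N : ℕ) (f : (Fin N → Fin (K + 1)) → ℝ) : ℝ :=
  ∑ ω : Fin N → Fin (K + 1), zibJoint ψ p K N ω * f ω

/-- The total number of detections `d = ∑ᵢ Yᵢ`. -/
def dTot {K N : ℕ} (ω : Fin N → Fin (K + 1)) : ℝ :=
  ∑ i, ((ω i : ℕ) : ℝ)

/-- The number of sites with at least one detection, `s_d = #{i : Yᵢ ≥ 1}`. -/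
def sDet {K N : ℕ} (ω : Fin N → Fin (K + 1)) : ℝ :=
  ((Finset.univ.filter fun i => (ω i : ℕ) ≠ 0).card : ℝ)

section Aux
open Finset

lemma binom_sum (p : ℝ) (K : ℕ) :
    ∑ k ∈ range (K+1), (K.choose k : ℝ) * p^k * (1-p)^(K-k) = 1 := by
  have h := add_pow p (1-p) K
  simp only [add_sub_cancel, one_pow] at h
  have h2 : ∑ k ∈ range (K+1), (K.choose k : ℝ) * p^k * (1-p)^(K-k)
      = ∑ m ∈ range (K+1), p^m * (1-p)^(K-m) * (K.choose m : ℝ) :=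
    Finset.sum_congr rfl fun k _ => by ring
  rw [h2]; exact h.symm

lemma tail_sum (p : ℝ) (K : ℕ) :
    ∑ k ∈ range K, ((K.choose (k+1) : ℝ) * p^(k+1) * (1-p)^(K-(k+1))) = 1 - (1-p)^K := by
  have h := binom_sum p K
  rw [Finset.sum_range_succ'] at h
  simp only [Nat.choose_zero_right, Nat.cast_one, pow_zero, Nat.sub_zero, one_mul, mul_one] at h
  linarith

lemma pmf_tail (ψ p : ℝ) (K : ℕ) :
    ∑ k ∈ range K, zibPmf ψ p K (k+1) = ψ * (1 - (1-p)^K) := by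
  have : ∀ k ∈ range K, zibPmf ψ p K (k+1) = ψ * ((K.choose (k+1) : ℝ) * p^(k+1) * (1-p)^(K-(k+1))) := by
    intro k _; simp only [zibPmf, Nat.succ_ne_zero, if_false]; ring
  rw [Finset.sum_congr rfl this, ← Finset.mul_sum, tail_sum]

lemma pmf_mass (ψ p : ℝ) (K : ℕ) :
    ∑ y ∈ range (K+1), zibPmf ψ p K y = 1 := by
  rw [Finset.sum_range_succ', pmf_tail]
  simp only [zibPmf, if_pos rfl, if_true, eq_self_iff_true]; ring

lemma pmf_mom_h (ψ p : ℝ) (K : ℕ) :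
    ∑ y ∈ range (K+1), zibPmf ψ p K y * (if y = 0 then (0:ℝ) else 1) = ψ * (1 - (1-p)^K) := by
  rw [Finset.sum_range_succ']
  simp only [Nat.succ_ne_zero, if_false, if_true, eq_self_iff_true, mul_one, mul_zero, add_zero]
  exact pmf_tail ψ p K

lemma binom_mean (p : ℝ) (K : ℕ) (hK : 0 < K) :
    ∑ k ∈ range (K+1), (k:ℝ) * (K.choose k : ℝ) * p^k * (1-p)^(K-k) = K * p := by
  obtain ⟨n, rfl⟩ : ∃ n, K = n + 1 := ⟨K-1, (Nat.succ_pred_eq_of_pos hK).symm⟩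
  rw [Finset.sum_range_succ']
  simp only [Nat.cast_zero, zero_mul, add_zero]
  have key : ∀ k ∈ range (n+1), ((k+1:ℕ):ℝ) * ((n+1).choose (k+1) : ℝ) * p^(k+1) * (1-p)^((n+1)-(k+1))
      = ((n+1:ℕ):ℝ) * p * (((n.choose k : ℝ)) * p^k * (1-p)^(n-k)) := by
    intro k hk
    have h1 : ((n+1 : ℕ) : ℝ) * (n.choose k : ℝ) = ((n+1).choose (k+1) : ℝ) * ((k+1 : ℕ) : ℝ) := by
      rw [← Nat.cast_mul, ← Nat.cast_mul, Nat.add_one_mul_choose_eq]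
    have h2 : (n+1) - (k+1) = n - k := by omega
    rw [h2]
    calc ((k+1:ℕ):ℝ) * ((n+1).choose (k+1) : ℝ) * p^(k+1) * (1-p)^(n-k)
        = ((n+1).choose (k+1) : ℝ) * ((k+1:ℕ):ℝ) * (p^(k+1) * (1-p)^(n-k)) := by ring
      _ = ((n+1:ℕ):ℝ) * (n.choose k : ℝ) * (p^(k+1) * (1-p)^(n-k)) := by rw [← h1]
      _ = ((n+1:ℕ):ℝ) * p * ((n.choose k : ℝ) * p^k * (1-p)^(n-k)) := by ring
  rw [Finset.sum_congr rfl key, ← Finset.mul_sum, binom_sum p n]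
  push_cast; ring

lemma pmf_mom_d (ψ p : ℝ) (K : ℕ) (hK : 0 < K) :
    ∑ y ∈ range (K+1), zibPmf ψ p K y * (y:ℝ) = ψ * K * p := by
  have step : ∀ y ∈ range (K+1), zibPmf ψ p K y * (y:ℝ)
      = ψ * ((y:ℝ) * (K.choose y : ℝ) * p^y * (1-p)^(K-y)) := by
    intro y _
    rcases Nat.eq_zero_or_pos y with rfl | hy
    · simp
    · simp only [zibPmf, Nat.pos_iff_ne_zero.mp hy, if_false]; ring
  rw [Finset.sum_congr rfl step, ← Finset.mul_sum, binom_mean p K hK]; ring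

lemma joint_factor {K N : ℕ} (g : Fin N → ℕ → ℝ) :
    ∑ ω : Fin N → Fin (K+1), ∏ i, g i ((ω i : ℕ)) = ∏ i, ∑ y ∈ range (K+1), g i y := by
  have h := Finset.prod_univ_sum (fun _ : Fin N => (univ : Finset (Fin (K+1))))
      (fun i y => g i (y : ℕ))
  rw [Fintype.piFinset_univ] at h
  rw [← h]
  apply Finset.prod_congr rfl
  intro i _
  exact Fin.sum_univ_eq_sum_range (fun y => g i y) (K+1)

lemma exp_single {K N : ℕ} (ψ p : ℝ) (f : ℕ → ℝ) (i : Fin N) :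
    ∑ ω : Fin N → Fin (K+1), (∏ j, zibPmf ψ p K (ω j)) * f (ω i)
      = ∑ y ∈ range (K+1), zibPmf ψ p K y * f y := by
  set G : Fin N → ℕ → ℝ := fun j y => if j = i then zibPmf ψ p K y * f y else zibPmf ψ p K y with hG
  have step1 : ∀ ω : Fin N → Fin (K+1), (∏ j, zibPmf ψ p K (ω j)) * f (ω i) = ∏ j, G j (ω j) := by
    intro ω
    rw [← Finset.mul_prod_erase univ (fun j => zibPmf ψ p K (ω j)) (mem_univ i),
        ← Finset.mul_prod_erase univ (fun j => G j (ω j)) (mem_univ i)]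
    have he : ∏ j ∈ univ.erase i, G j (ω j) = ∏ j ∈ univ.erase i, zibPmf ψ p K (ω j) :=
      Finset.prod_congr rfl fun j hj => by
        simp only [hG, if_neg (Finset.mem_erase.mp hj).1]
    rw [he]
    simp only [hG, if_pos rfl]
    ring
  rw [Finset.sum_congr rfl fun ω _ => step1 ω, joint_factor]
  rw [← Finset.mul_prod_erase univ _ (mem_univ i)]
  have he2 : ∏ j ∈ univ.erase i, ∑ y ∈ range (K+1), G j y = 1 := by
    apply Finset.prod_eq_one
    intro j hj
    have : ∀ y ∈ range (K+1), G j y = zibPmf ψ p K y := fun y _ => by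
      simp only [hG, if_neg (Finset.mem_erase.mp hj).1]
    rw [Finset.sum_congr rfl this, pmf_mass]
  rw [he2, mul_one]
  apply Finset.sum_congr rfl
  intro y _; simp only [hG, if_pos rfl]

lemma exp_pair {K N : ℕ} (ψ p : ℝ) (f g : ℕ → ℝ) (i j : Fin N) (hij : i ≠ j) :
    ∑ ω : Fin N → Fin (K+1), (∏ k, zibPmf ψ p K (ω k)) * (f (ω i) * g (ω j))
      = (∑ y ∈ range (K+1), zibPmf ψ p K y * f y) * (∑ y ∈ range (K+1), zibPmf ψ p K y * g y) := by
  set G : Fin N → ℕ → ℝ := fun k y =>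
    if k = i then zibPmf ψ p K y * f y else if k = j then zibPmf ψ p K y * g y
    else zibPmf ψ p K y with hG
  have hj' : j ∈ univ.erase i := Finset.mem_erase.mpr ⟨hij.symm, mem_univ j⟩
  have step1 : ∀ ω : Fin N → Fin (K+1),
      (∏ k, zibPmf ψ p K (ω k)) * (f (ω i) * g (ω j)) = ∏ k, G k (ω k) := by
    intro ω
    rw [← Finset.mul_prod_erase univ (fun k => zibPmf ψ p K (ω k)) (mem_univ i),
        ← Finset.mul_prod_erase _ (fun k => zibPmf ψ p K (ω k)) hj',
        ← Finset.mul_prod_erase univ (fun k => G k (ω k)) (mem_univ i),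
        ← Finset.mul_prod_erase _ (fun k => G k (ω k)) hj']
    have he : ∏ k ∈ (univ.erase i).erase j, G k (ω k)
        = ∏ k ∈ (univ.erase i).erase j, zibPmf ψ p K (ω k) :=
      Finset.prod_congr rfl fun k hk => by
        have h1 := (Finset.mem_erase.mp hk).1
        have h2 := (Finset.mem_erase.mp (Finset.mem_erase.mp hk).2).1
        simp only [hG, if_neg h2, if_neg h1]
    rw [he]
    simp only [hG, if_pos rfl, if_neg hij.symm, if_true, eq_self_iff_true]
    ring
  rw [Finset.sum_congr rfl fun ω _ => step1 ω, joint_factor]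
  rw [← Finset.mul_prod_erase univ _ (mem_univ i), ← Finset.mul_prod_erase _ _ hj']
  have he2 : ∏ k ∈ (univ.erase i).erase j, ∑ y ∈ range (K+1), G k y = 1 := by
    apply Finset.prod_eq_one
    intro k hk
    have h1 := (Finset.mem_erase.mp hk).1
    have h2 := (Finset.mem_erase.mp (Finset.mem_erase.mp hk).2).1
    have : ∀ y ∈ range (K+1), G k y = zibPmf ψ p K y := fun y _ => by
      simp only [hG, if_neg h2, if_neg h1]
    rw [Finset.sum_congr rfl this, pmf_mass]
  rw [he2, mul_one]
  congr 1
  · exact Finset.sum_congr rfl fun y _ => by simp only [hG, if_pos rfl]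
  · exact Finset.sum_congr rfl fun y _ => by
      simp only [hG, if_neg hij.symm, if_pos rfl, if_true, eq_self_iff_true]

lemma joint_mass (ψ p : ℝ) (K N : ℕ) :
    ∑ ω : Fin N → Fin (K+1), zibJoint ψ p K N ω = 1 := by
  show ∑ ω : Fin N → Fin (K+1), ∏ i, zibPmf ψ p K (ω i) = 1
  rw [joint_factor (fun _ y => zibPmf ψ p K y)]
  exact Finset.prod_eq_one fun i _ => pmf_mass ψ p K

noncomputable def hInd : ℕ → ℝ := fun y => if y = 0 then (0:ℝ) else 1
noncomputable def gId : ℕ → ℝ := fun y => (y:ℝ)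

lemma sDet_eq {K N : ℕ} (ω : Fin N → Fin (K+1)) : sDet ω = ∑ i, hInd ((ω i : ℕ)) := by
  rw [sDet, Finset.card_filter, Nat.cast_sum]
  apply Finset.sum_congr rfl
  intro i _
  by_cases h : (ω i : ℕ) = 0 <;> simp [h, hInd]

lemma dTot_eq {K N : ℕ} (ω : Fin N → Fin (K+1)) : dTot ω = ∑ i, gId ((ω i : ℕ)) := rfl

lemma pmf_mom_hd (ψ p : ℝ) (K : ℕ) (hK : 0 < K) :
    ∑ y ∈ range (K+1), zibPmf ψ p K y * (hInd y * gId y) = ψ * K * p := by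
  rw [← pmf_mom_d ψ p K hK]
  apply Finset.sum_congr rfl
  intro y _
  rcases Nat.eq_zero_or_pos y with rfl | hy
  · simp [hInd, gId]
  · simp [hInd, gId, Nat.pos_iff_ne_zero.mp hy]

lemma pmf_mom_hh (ψ p : ℝ) (K : ℕ) :
    ∑ y ∈ range (K+1), zibPmf ψ p K y * (hInd y * hInd y) = ψ * (1 - (1-p)^K) := by
  rw [← pmf_mom_h ψ p K]
  apply Finset.sum_congr rfl
  intro y _
  by_cases h : y = 0 <;> simp [hInd, h]

lemma pmf_mom_h' (ψ p : ℝ) (K : ℕ) :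
    ∑ y ∈ range (K+1), zibPmf ψ p K y * hInd y = ψ * (1 - (1-p)^K) :=
  pmf_mom_h ψ p K

lemma pmf_mom_g (ψ p : ℝ) (K : ℕ) (hK : 0 < K) :
    ∑ y ∈ range (K+1), zibPmf ψ p K y * gId y = ψ * K * p :=
  pmf_mom_d ψ p K hK

lemma exp_sum_stat {K N : ℕ} (ψ p : ℝ) (f : ℕ → ℝ) :
    zibExp ψ p K N (fun ω => ∑ i, f ((ω i : ℕ)))
      = (N:ℝ) * ∑ y ∈ range (K+1), zibPmf ψ p K y * f y := by
  rw [zibExp]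
  have : ∀ ω ∈ (univ : Finset (Fin N → Fin (K+1))), zibJoint ψ p K N ω * (∑ i, f ((ω i : ℕ)))
      = ∑ i, (∏ j, zibPmf ψ p K (ω j)) * f ((ω i : ℕ)) := by
    intro ω _; rw [zibJoint, Finset.mul_sum]
  rw [Finset.sum_congr rfl this, Finset.sum_comm]
  rw [Finset.sum_congr rfl fun i _ => exp_single ψ p f i]
  rw [Finset.sum_const, card_univ, Fintype.card_fin, nsmul_eq_mul]

lemma exp_sum_stat2 {K N : ℕ} (ψ p : ℝ) (f g : ℕ → ℝ) :
    zibExp ψ p K N (fun ω => (∑ i, f ((ω i : ℕ))) * (∑ i, g ((ω i : ℕ))))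
      = (N:ℝ) * (∑ y ∈ range (K+1), zibPmf ψ p K y * (f y * g y))
        + (N:ℝ) * ((N - 1 : ℕ):ℝ) * ((∑ y ∈ range (K+1), zibPmf ψ p K y * f y)
            * (∑ y ∈ range (K+1), zibPmf ψ p K y * g y)) := by
  rw [zibExp]
  have expand : ∀ ω ∈ (univ : Finset (Fin N → Fin (K+1))),
      zibJoint ψ p K N ω * ((∑ i, f ((ω i : ℕ))) * (∑ i, g ((ω i : ℕ))))
      = ∑ i, ∑ j, (∏ k, zibPmf ψ p K (ω k)) * (f ((ω i : ℕ)) * g ((ω j : ℕ))) := by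
    intro ω _
    rw [zibJoint, Finset.sum_mul_sum]
    rw [Finset.mul_sum]
    apply Finset.sum_congr rfl; intro i _
    rw [Finset.mul_sum]
  rw [Finset.sum_congr rfl expand, Finset.sum_comm]
  have inner : ∀ i : Fin N,
      (∑ ω : Fin N → Fin (K+1), ∑ j, (∏ k, zibPmf ψ p K (ω k)) * (f ((ω i : ℕ)) * g ((ω j : ℕ))))
      = (∑ y ∈ range (K+1), zibPmf ψ p K y * (f y * g y))
        + ((N - 1 : ℕ):ℝ) * ((∑ y ∈ range (K+1), zibPmf ψ p K y * f y)
            * (∑ y ∈ range (K+1), zibPmf ψ p K y * g y)) := by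
    intro i
    rw [Finset.sum_comm]
    rw [← Finset.add_sum_erase _ _ (mem_univ i)]
    congr 1
    · rw [← exp_single ψ p (fun y => f y * g y) i]
    · rw [Finset.sum_congr rfl fun j hj => exp_pair ψ p f g i j
          (fun h => (Finset.mem_erase.mp hj).1 h.symm)]
      rw [Finset.sum_const, Finset.card_erase_of_mem (mem_univ i), card_univ, Fintype.card_fin,
        nsmul_eq_mul]
  rw [Finset.sum_congr rfl fun i _ => inner i, Finset.sum_const, card_univ, Fintype.card_fin,
    nsmul_eq_mul, mul_add]
  ring

lemma zibExp_congr {K N : ℕ} (ψ p : ℝ) (f g : (Fin N → Fin (K+1)) → ℝ)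
    (h : ∀ ω, f ω = g ω) : zibExp ψ p K N f = zibExp ψ p K N g := by
  unfold zibExp
  exact Finset.sum_congr rfl fun ω _ => by rw [h ω]

lemma zibExp_quad {K N : ℕ} (ψ p : ℝ) (c1 c2 c3 c4 c5 : ℝ) :
    zibExp ψ p K N (fun ω => c1 * (sDet ω * dTot ω) + c2 * (sDet ω * sDet ω)
        + c3 * sDet ω + c4 * dTot ω + c5)
      = c1 * zibExp ψ p K N (fun ω => sDet ω * dTot ω)
        + c2 * zibExp ψ p K N (fun ω => sDet ω * sDet ω)
        + c3 * zibExp ψ p K N (fun ω => sDet ω)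
        + c4 * zibExp ψ p K N (fun ω => dTot ω) + c5 := by
  unfold zibExp
  have : ∀ ω ∈ (univ : Finset (Fin N → Fin (K+1))),
      zibJoint ψ p K N ω * (c1 * (sDet ω * dTot ω) + c2 * (sDet ω * sDet ω)
        + c3 * sDet ω + c4 * dTot ω + c5)
      = c1 * (zibJoint ψ p K N ω * (sDet ω * dTot ω))
        + c2 * (zibJoint ψ p K N ω * (sDet ω * sDet ω))
        + c3 * (zibJoint ψ p K N ω * sDet ω)
        + c4 * (zibJoint ψ p K N ω * dTot ω)
        + c5 * zibJoint ψ p K N ω := fun ω _ => by ring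
  rw [Finset.sum_congr rfl this]
  rw [Finset.sum_add_distrib, Finset.sum_add_distrib, Finset.sum_add_distrib,
    Finset.sum_add_distrib, ← Finset.mul_sum, ← Finset.mul_sum, ← Finset.mul_sum,
    ← Finset.mul_sum, ← Finset.mul_sum, joint_mass, mul_one]

lemma zibExp_lin {K N : ℕ} (ψ p : ℝ) (a b c : ℝ) :
    zibExp ψ p K N (fun ω => a * sDet ω + b * dTot ω + c)
      = a * zibExp ψ p K N (fun ω => sDet ω) + b * zibExp ψ p K N (fun ω => dTot ω) + c := by
  unfold zibExp
  have : ∀ ω ∈ (univ : Finset (Fin N → Fin (K+1))),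
      zibJoint ψ p K N ω * (a * sDet ω + b * dTot ω + c)
      = a * (zibJoint ψ p K N ω * sDet ω) + b * (zibJoint ψ p K N ω * dTot ω)
        + c * zibJoint ψ p K N ω := fun ω _ => by ring
  rw [Finset.sum_congr rfl this]
  rw [Finset.sum_add_distrib, Finset.sum_add_distrib, ← Finset.mul_sum, ← Finset.mul_sum,
    ← Finset.mul_sum, joint_mass, mul_one]

end Aux

set_option maxHeartbeats 2000000 in
/-- With data `Y₁, …, Y_N` i.i.d. ZIB`(ψ_T, K, p_T)`,
`θ_T = 1 − (1−p_T)^K`, `θ = 1 − (1−p)^K`, and score components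
`S₁ = (s_d − ψθN)/(ψ(1 − ψθ))` and
`S₂ = (d − s_d K p)/(p(1−p)) − (N − s_d) ψ K (1−θ)/((1 − ψθ)(1−p))`, one has
`Cov(S₁, S₂) = E(S₁S₂) − E(S₁)E(S₂)
  = N ψ_T (1 − ψ_T θ_T) K ((p_T − p θ_T)/(ψ(1 − ψθ) p(1−p)) + (1−θ)θ_T/((1 − ψθ)²(1−p)))`. -/
theorem zib_score_S1_S2_covariance (ψT pT ψ p : ℝ)
    (hψT0 : 0 < ψT) (hψT1 : ψT < 1) (hpT0 : 0 < pT) (hpT1 : pT < 1)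
    (hψ0 : 0 < ψ) (hψ1 : ψ < 1) (hp0 : 0 < p) (hp1 : p < 1)
    (K N : ℕ) (hK : 0 < K) (hN : 0 < N) :
    zibExp ψT pT K N (fun ω =>
          ((sDet ω - ψ * (1 - (1 - p) ^ K) * (N : ℝ)) /
              (ψ * (1 - ψ * (1 - (1 - p) ^ K)))) *
            ((dTot ω - sDet ω * (K : ℝ) * p) / (p * (1 - p)) -
              ((N : ℝ) - sDet ω) * ψ * (K : ℝ) * (1 - (1 - (1 - p) ^ K)) /
                ((1 - ψ * (1 - (1 - p) ^ K)) * (1 - p)))) -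
        zibExp ψT pT K N (fun ω =>
            (sDet ω - ψ * (1 - (1 - p) ^ K) * (N : ℝ)) /
              (ψ * (1 - ψ * (1 - (1 - p) ^ K)))) *
          zibExp ψT pT K N (fun ω =>
            (dTot ω - sDet ω * (K : ℝ) * p) / (p * (1 - p)) -
              ((N : ℝ) - sDet ω) * ψ * (K : ℝ) * (1 - (1 - (1 - p) ^ K)) /
                ((1 - ψ * (1 - (1 - p) ^ K)) * (1 - p))) =
      (N : ℝ) * ψT * (1 - ψT * (1 - (1 - pT) ^ K)) * (K : ℝ) *
        ((pT - p * (1 - (1 - pT) ^ K)) /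
            (ψ * (1 - ψ * (1 - (1 - p) ^ K)) * p * (1 - p)) +
          (1 - (1 - (1 - p) ^ K)) * (1 - (1 - pT) ^ K) /
            ((1 - ψ * (1 - (1 - p) ^ K)) ^ 2 * (1 - p))) := by
  -- nonzeroness facts
  have hψne : ψ ≠ 0 := ne_of_gt hψ0
  have hpne : p ≠ 0 := ne_of_gt hp0
  have h1p : (0:ℝ) < 1 - p := by linarith
  have h1pne : (1:ℝ) - p ≠ 0 := ne_of_gt h1p
  have hqK0 : (0:ℝ) < (1-p)^K := pow_pos h1p K
  have hqK1 : (1-p)^K < 1 := pow_lt_one₀ (le_of_lt h1p) (by linarith) (Nat.pos_iff_ne_zero.mp hK)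
  have hθ0 : (0:ℝ) < 1 - (1-p)^K := by linarith
  have hθ1 : 1 - (1-p)^K < 1 := by linarith
  have hA0 : (0:ℝ) < 1 - ψ * (1 - (1-p)^K) := by nlinarith
  have hAne : (1:ℝ) - ψ * (1 - (1-p)^K) ≠ 0 := ne_of_gt hA0
  -- abbreviations
  set θ : ℝ := 1 - (1-p)^K with hθdef
  set A : ℝ := ψ * (1 - ψ * θ) with hAdef
  have hApos : 0 < A := mul_pos hψ0 hA0
  have hAne' : A ≠ 0 := ne_of_gt hApos
  set θT : ℝ := 1 - (1-pT)^K with hθT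
  set μh : ℝ := ψT * θT with hμh
  set μd : ℝ := ψT * K * pT with hμd
  -- moments of sDet and dTot
  have hEs : zibExp ψT pT K N (fun ω => sDet ω) = (N:ℝ) * μh := by
    rw [zibExp_congr ψT pT _ _ (fun ω => sDet_eq ω), exp_sum_stat, pmf_mom_h' ψT pT K]
  have hEd : zibExp ψT pT K N (fun ω => dTot ω) = (N:ℝ) * μd := by
    rw [zibExp_congr ψT pT _ _ (fun ω => dTot_eq ω), exp_sum_stat, pmf_mom_g ψT pT K hK]
  have hEsd : zibExp ψT pT K N (fun ω => sDet ω * dTot ω)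
      = (N:ℝ) * μd + (N:ℝ) * ((N-1:ℕ):ℝ) * (μh * μd) := by
    rw [zibExp_congr ψT pT _ _ (fun ω => by rw [sDet_eq ω, dTot_eq ω]), exp_sum_stat2,
      pmf_mom_hd ψT pT K hK, pmf_mom_h' ψT pT K, pmf_mom_g ψT pT K hK]
  have hEss : zibExp ψT pT K N (fun ω => sDet ω * sDet ω)
      = (N:ℝ) * μh + (N:ℝ) * ((N-1:ℕ):ℝ) * (μh * μh) := by
    rw [zibExp_congr ψT pT _ _ (fun ω => by rw [sDet_eq ω]), exp_sum_stat2,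
      pmf_mom_hh ψT pT K, pmf_mom_h' ψT pT K]
  -- coefficients
  set B : ℝ := ψ * K * (1 - θ) / ((1 - ψ * θ) * (1 - p)) with hB
  set a2 : ℝ := B - (K * p) / (p * (1 - p)) with ha2
  set b2 : ℝ := 1 / (p * (1 - p)) with hb2
  set c2' : ℝ := -(N:ℝ) * B with hc2
  set m : ℝ := ψ * θ * (N:ℝ) with hm
  -- pointwise identifications
  have hS2 : ∀ ω : Fin N → Fin (K+1),
      ((dTot ω - sDet ω * (K : ℝ) * p) / (p * (1 - p)) -
        ((N : ℝ) - sDet ω) * ψ * (K : ℝ) * (1 - θ) / ((1 - ψ * θ) * (1 - p)))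
      = a2 * sDet ω + b2 * dTot ω + c2' := by
    intro ω
    rw [ha2, hb2, hc2, hB]
    field_simp
    ring
  have hS1 : ∀ ω : Fin N → Fin (K+1),
      ((sDet ω - ψ * θ * (N : ℝ)) / A) = (1/A) * sDet ω + 0 * dTot ω + (-(m/A)) := by
    intro ω
    rw [hm]
    field_simp
    ring
  have hS1S2 : ∀ ω : Fin N → Fin (K+1),
      ((sDet ω - ψ * θ * (N : ℝ)) / A) *
        ((dTot ω - sDet ω * (K : ℝ) * p) / (p * (1 - p)) -
          ((N : ℝ) - sDet ω) * ψ * (K : ℝ) * (1 - θ) / ((1 - ψ * θ) * (1 - p)))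
      = (b2/A) * (sDet ω * dTot ω) + (a2/A) * (sDet ω * sDet ω)
        + ((c2' - m * a2)/A) * sDet ω + (-(m * b2)/A) * dTot ω + (-(m * c2')/A) := by
    intro ω
    rw [hS2 ω]
    have : (sDet ω - ψ * θ * (N : ℝ)) / A = (sDet ω - m) / A := by rw [hm]
    rw [this]
    field_simp
    ring
  -- compute the three expectations
  have hE12 : zibExp ψT pT K N (fun ω =>
      ((sDet ω - ψ * θ * (N : ℝ)) / A) *
        ((dTot ω - sDet ω * (K : ℝ) * p) / (p * (1 - p)) -
          ((N : ℝ) - sDet ω) * ψ * (K : ℝ) * (1 - θ) / ((1 - ψ * θ) * (1 - p))))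
      = (b2/A) * ((N:ℝ) * μd + (N:ℝ) * ((N-1:ℕ):ℝ) * (μh * μd))
        + (a2/A) * ((N:ℝ) * μh + (N:ℝ) * ((N-1:ℕ):ℝ) * (μh * μh))
        + ((c2' - m * a2)/A) * ((N:ℝ) * μh) + (-(m * b2)/A) * ((N:ℝ) * μd)
        + (-(m * c2')/A) := by
    rw [zibExp_congr ψT pT _ _ hS1S2, zibExp_quad, hEsd, hEss, hEs, hEd]
  have hE1 : zibExp ψT pT K N (fun ω => (sDet ω - ψ * θ * (N : ℝ)) / A)
      = (1/A) * ((N:ℝ) * μh) + 0 * ((N:ℝ) * μd) + (-(m/A)) := by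
    rw [zibExp_congr ψT pT _ _ hS1, zibExp_lin, hEs, hEd]
  have hE2 : zibExp ψT pT K N (fun ω =>
      (dTot ω - sDet ω * (K : ℝ) * p) / (p * (1 - p)) -
        ((N : ℝ) - sDet ω) * ψ * (K : ℝ) * (1 - θ) / ((1 - ψ * θ) * (1 - p)))
      = a2 * ((N:ℝ) * μh) + b2 * ((N:ℝ) * μd) + c2' := by
    rw [zibExp_congr ψT pT _ _ hS2, zibExp_lin, hEs, hEd]
  rw [hE12, hE1, hE2]
  -- algebra
  have hN1 : ((N-1:ℕ):ℝ) = (N:ℝ) - 1 := by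
    have : (1:ℕ) ≤ N := hN
    push_cast [Nat.cast_sub this]
    ring
  rw [hN1]
  have comb : (b2/A) * ((N:ℝ) * μd + (N:ℝ) * ((N:ℝ)-1) * (μh * μd))
        + (a2/A) * ((N:ℝ) * μh + (N:ℝ) * ((N:ℝ)-1) * (μh * μh))
        + ((c2' - m * a2)/A) * ((N:ℝ) * μh) + (-(m * b2)/A) * ((N:ℝ) * μd)
        + (-(m * c2')/A)
        - ((1/A) * ((N:ℝ) * μh) + 0 * ((N:ℝ) * μd) + (-(m/A)))
          * (a2 * ((N:ℝ) * μh) + b2 * ((N:ℝ) * μd) + c2')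
      = ((N:ℝ)/A) * (1 - μh) * (b2 * μd + a2 * μh) := by ring
  rw [comb, hμh, hμd, ha2, hb2, hB, hAdef]
  have h1pT : (0:ℝ) < 1 - pT := by linarith
  field_simp
  ring
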